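/- Let Y ⊆ ℝ^m be compact convex with diameter D_Y, y_0 ∈ Y, μ ≥ 0, and for β ≥ 0 with β + μ > 0 suppose L(x,·) is μ-strongly concave and continuous on Y, so that L_β(x,y) := L(x,y) − (β/2)‖y−y_0‖² has a unique maximizer y*_β(x) over Y. Then for any β_{t+1} ≤ β_t (both with β+μ > 0): ‖y*_{β_t}(x) − y*_{β_{t+1}}(x)‖ ≤ 2 D_Y (β_t − β_{t+1}) / (β_{t+1} + μ). -/

import Mathlib

open Filter Topology

lemma comb_norm_sq {E : Type*} [NormedAddCommGroup E] [InnerProductSpace ℝ E]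
    (a b : E) (ξ : ℝ) :
    ‖ξ • a + (1 - ξ) • b‖ ^ 2 =
      ξ * ‖a‖ ^ 2 + (1 - ξ) * ‖b‖ ^ 2 - ξ * (1 - ξ) * ‖a - b‖ ^ 2 := by
  have e : ∀ x : E, ‖x‖ ^ 2 = inner ℝ x x := fun x => (real_inner_self_eq_norm_sq x).symm
  simp only [e]
  simp only [inner_add_add_self, inner_sub_sub_self, real_inner_smul_left,
    real_inner_smul_right]
  ring


lemma limit_aux (c d K : ℝ)
    (h : ∀ ξ ∈ Set.Ioc (0:ℝ) 1, c / 2 * (1 - ξ) * d ^ 2 ≤ K) :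
    c / 2 * d ^ 2 ≤ K := by
  have hcont : Continuous (fun ξ : ℝ => c / 2 * (1 - ξ) * d ^ 2) := by continuity
  have htend : Filter.Tendsto (fun ξ : ℝ => c / 2 * (1 - ξ) * d ^ 2) (𝓝[>] (0:ℝ))
      (𝓝 (c / 2 * d ^ 2)) := by
    have h2 := (hcont.tendsto 0).mono_left (nhdsWithin_le_nhds (s := Set.Ioi (0:ℝ)))
    simpa using h2
  refine le_of_tendsto htend ?_
  filter_upwards [Ioc_mem_nhdsGT_of_mem (Set.mem_Ico.mpr ⟨le_refl (0:ℝ), zero_lt_one⟩)]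
    with ξ hξ using h ξ hξ



/-- Drift of the regularized best response as the smoothing parameter decreases:
if `y₁` maximizes `L(x,·) − (β_t/2)‖·−y₀‖²` and `y₂` maximizes
`L(x,·) − (β_{t+1}/2)‖·−y₀‖²` over `Y`, with `β_{t+1} ≤ β_t`, then
`‖y₁ − y₂‖ ≤ 2 D_Y (β_t − β_{t+1})/(β_{t+1} + μ)`. -/
theorem best_response_drift (m : ℕ)
    (Y : Set (EuclideanSpace ℝ (Fin m)))
    (hYne : Y.Nonempty) (hYcomp : IsCompact Y) (hYconv : Convex ℝ Y)
    (DY : ℝ) (hD : ∀ u ∈ Y, ∀ v ∈ Y, ‖u - v‖ ≤ DY)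
    (y0 : EuclideanSpace ℝ (Fin m)) (hy0 : y0 ∈ Y)
    (μ : ℝ) (hμ : 0 ≤ μ)
    (L : EuclideanSpace ℝ (Fin m) → ℝ) (hLcont : ContinuousOn L Y)
    (hLsc : ∀ y ∈ Y, ∀ y' ∈ Y, ∀ ξ : ℝ, 0 ≤ ξ → ξ ≤ 1 →
      ξ * L y + (1 - ξ) * L y' + (μ / 2) * ξ * (1 - ξ) * ‖y - y'‖ ^ 2 ≤
        L (ξ • y + (1 - ξ) • y'))
    (βt βt1 : ℝ) (hβ1 : 0 ≤ βt1) (hββ : βt1 ≤ βt)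
    (hpos1 : 0 < βt1 + μ) (hpos : 0 < βt + μ)
    (y1 : EuclideanSpace ℝ (Fin m)) (hy1 : y1 ∈ Y)
    (hy1max : ∀ y ∈ Y, L y - (βt / 2) * ‖y - y0‖ ^ 2 ≤
      L y1 - (βt / 2) * ‖y1 - y0‖ ^ 2)
    (y2 : EuclideanSpace ℝ (Fin m)) (hy2 : y2 ∈ Y)
    (hy2max : ∀ y ∈ Y, L y - (βt1 / 2) * ‖y - y0‖ ^ 2 ≤
      L y2 - (βt1 / 2) * ‖y2 - y0‖ ^ 2) :
    ‖y1 - y2‖ ≤ 2 * DY * (βt - βt1) / (βt1 + μ) := by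
  set d : ℝ := ‖y1 - y2‖ with hd
  set c : ℝ := βt1 + μ with hc
  set K : ℝ := (L y2 - (βt1 / 2) * ‖y2 - y0‖ ^ 2) -
      (L y1 - (βt1 / 2) * ‖y1 - y0‖ ^ 2) with hK
  -- quadratic growth at the maximizer y2
  have hquad : c / 2 * d ^ 2 ≤ K := by
    have hstep : ∀ ξ ∈ Set.Ioc (0:ℝ) 1, c / 2 * (1 - ξ) * d ^ 2 ≤ K := by
      intro ξ hξ
      obtain ⟨hξ0, hξ1⟩ := hξ
      have hw : ξ • y1 + (1 - ξ) • y2 ∈ Y :=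
        hYconv hy1 hy2 hξ0.le (by linarith) (by ring)
      have h1 := hLsc y1 hy1 y2 hy2 ξ hξ0.le hξ1
      have h2 := hy2max _ hw
      have h3 : ‖(ξ • y1 + (1 - ξ) • y2) - y0‖ ^ 2 =
          ξ * ‖y1 - y0‖ ^ 2 + (1 - ξ) * ‖y2 - y0‖ ^ 2 - ξ * (1 - ξ) * ‖y1 - y2‖ ^ 2 := by
        have h4 := comb_norm_sq (y1 - y0) (y2 - y0) ξ
        have h5 : ξ • (y1 - y0) + (1 - ξ) • (y2 - y0) = (ξ • y1 + (1 - ξ) • y2) - y0 := by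
          module
        have h6 : (y1 - y0) - (y2 - y0) = y1 - y2 := by abel
        rw [h5, h6] at h4
        exact h4
      rw [h3] at h2
      have hmul : ξ * (c / 2 * (1 - ξ) * d ^ 2 - K) ≤ 0 := by
        rw [hK, hc, hd]; nlinarith [h1, h2]
      by_contra hcon
      push_neg at hcon
      nlinarith [mul_pos hξ0 (by linarith : (0:ℝ) < c / 2 * (1 - ξ) * d ^ 2 - K)]
    exact limit_aux c d K hstep
  -- bound K
  have hn1 : ‖y1 - y0‖ ≤ DY := hD y1 hy1 y0 hy0
  have hn2 : ‖y2 - y0‖ ≤ DY := hD y2 hy2 y0 hy0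
  have habs : ‖y2 - y0‖ - ‖y1 - y0‖ ≤ d := by
    rw [hd]
    have hnn := abs_norm_sub_norm_le (y2 - y0) (y1 - y0)
    have h0 : y2 - y0 - (y1 - y0) = -(y1 - y2) := by abel
    rw [h0, norm_neg] at hnn
    exact le_trans (le_abs_self _) hnn
  have hF1 : L y2 - (βt / 2) * ‖y2 - y0‖ ^ 2 ≤ L y1 - (βt / 2) * ‖y1 - y0‖ ^ 2 :=
    hy1max y2 hy2
  have hDY0 : 0 ≤ DY := le_trans (norm_nonneg _) (hD y0 hy0 y0 hy0)
  have hn10 : 0 ≤ ‖y1 - y0‖ := norm_nonneg _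
  have hn20 : 0 ≤ ‖y2 - y0‖ := norm_nonneg _
  have hd0 : 0 ≤ d := norm_nonneg _
  have hKle : K ≤ (βt - βt1) * DY * d := by
    have e2 : ‖y2 - y0‖ ^ 2 - ‖y1 - y0‖ ^ 2 ≤ d * (2 * DY) := by
      nlinarith [habs, hn1, hn2, hn10, hn20, hd0]
    have e3 : (βt - βt1) / 2 * (‖y2 - y0‖ ^ 2 - ‖y1 - y0‖ ^ 2) ≤
        (βt - βt1) / 2 * (d * (2 * DY)) :=
      mul_le_mul_of_nonneg_left e2 (by linarith)
    have e1 : K ≤ (βt - βt1) / 2 * (‖y2 - y0‖ ^ 2 - ‖y1 - y0‖ ^ 2) := by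
      rw [hK]; linarith [hF1]
    calc K ≤ (βt - βt1) / 2 * (‖y2 - y0‖ ^ 2 - ‖y1 - y0‖ ^ 2) := e1
      _ ≤ (βt - βt1) / 2 * (d * (2 * DY)) := e3
      _ = (βt - βt1) * DY * d := by ring
  -- conclude
  clear_value d c K
  rw [le_div_iff₀ hpos1]
  rcases eq_or_lt_of_le hd0 with h | h
  · rw [← h, zero_mul]
    exact mul_nonneg (by linarith) (by linarith)
  · have h7 : (c / 2 * d) * d ≤ ((βt - βt1) * DY) * d := by
      calc (c / 2 * d) * d = c / 2 * d ^ 2 := by ring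
        _ ≤ K := hquad
        _ ≤ (βt - βt1) * DY * d := hKle
    have h8 : c / 2 * d ≤ (βt - βt1) * DY := le_of_mul_le_mul_right h7 h
    linarith [h8]
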